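/- arXiv:1408.0902 — 6 statements merged into one kernel-verified Lean document; each statement's English description precedes it below -/
import Mathlib

section
/- Let $E$ be a symmetric trace-free $n \times n$ real matrix ($n \ge 2$). Then $\operatorname{tr}(E^3) \ge -\frac{n-2}{\sqrt{n(n-1)}} \, (\operatorname{tr}(E^2))^{3/2}$. -/
open scoped BigOperators

theorem trace_pow_eq_sum (n : ℕ) (E : Matrix (Fin n) (Fin n) ℝ) (k : ℕ)
    (hE : E.IsHermitian) :
    (E ^ k).trace = ∑ i, hE.eigenvalues i ^ k := by
  set U : Matrix (Fin n) (Fin n) ℝ := (hE.eigenvectorUnitary : Matrix (Fin n) (Fin n) ℝ) with hU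
  have hUU : star U * U = 1 := Matrix.mem_unitaryGroup_iff'.mp hE.eigenvectorUnitary.2
  have hUU' : U * star U = 1 := Matrix.mem_unitaryGroup_iff.mp hE.eigenvectorUnitary.2
  obtain ⟨d, hD, hsum⟩ : ∃ d : Fin n → ℝ, E = U * Matrix.diagonal d * star U ∧
      (∑ i, hE.eigenvalues i ^ k) = ∑ i, d i ^ k := by
    refine ⟨hE.eigenvalues, ?_, rfl⟩
    have := hE.spectral_theorem
    simpa using this
  have hpow : E ^ k = U * (Matrix.diagonal d) ^ k * star U := by
    clear hsum
    induction k with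
    | zero => simp [pow_zero, hUU']
    | succ m ih =>
        rw [pow_succ, ih]
        nth_rewrite 1 [hD]
        simp only [Matrix.mul_assoc]
        rw [← Matrix.mul_assoc (star U) U, hUU, Matrix.one_mul]
        simp [pow_succ, Matrix.mul_assoc]
  rw [hsum, hpow, Matrix.trace_mul_cycle, hUU, Matrix.one_mul,
    Matrix.diagonal_pow, Matrix.trace_diagonal]
  simp

theorem scalar_cubic (n : ℕ) (hn : 2 ≤ n) (a : Fin n → ℝ) (h0 : ∑ i, a i = 0) :
    ∑ i, (a i) ^ 3 ≥
      -((n - 2 : ℝ) / Real.sqrt (n * (n - 1))) * (∑ i, (a i) ^ 2) ^ ((3 : ℝ) / 2) := by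
  have hn1 : (1:ℝ) ≤ n := by exact_mod_cast Nat.one_le_of_lt hn
  have hn2 : (2:ℝ) ≤ n := by exact_mod_cast hn
  set s : ℝ := ∑ i, (a i) ^ 2 with hs_def
  have hs : 0 ≤ s := Finset.sum_nonneg fun i _ => sq_nonneg _
  have hc : 0 < (n:ℝ) * ((n:ℝ) - 1) := by nlinarith
  set c : ℝ := (n:ℝ) * ((n:ℝ) - 1) with hc_def
  set τ : ℝ := Real.sqrt (s / c) with hτ_def
  have hτ0 : 0 ≤ τ := Real.sqrt_nonneg _
  have hτ2 : c * τ ^ 2 = s := by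
    rw [hτ_def, Real.sq_sqrt (by positivity : (0:ℝ) ≤ s / c)]
    have hcne := hc.ne'
    field_simp
  -- Step (a): each a i ≥ -(n-1)τ
  have bound : ∀ i : Fin n, -(((n:ℝ) - 1) * τ) ≤ a i := by
    intro i
    have h1 : (∑ j ∈ Finset.univ.erase i, a j) = -a i := by
      rw [Finset.sum_erase_eq_sub (Finset.mem_univ i), h0]; ring
    have h2 : (∑ j ∈ Finset.univ.erase i, a j) ^ 2 ≤
        ((Finset.univ.erase i).card : ℝ) * ∑ j ∈ Finset.univ.erase i, (a j) ^ 2 :=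
      sq_sum_le_card_mul_sum_sq
    have hcard : ((Finset.univ.erase i).card : ℝ) = (n:ℝ) - 1 := by
      simp [Finset.card_erase_of_mem]
      rw [Nat.cast_sub (by omega : 1 ≤ n)]
      simp
    have h3 : (∑ j ∈ Finset.univ.erase i, (a j) ^ 2) = s - (a i) ^ 2 := by
      rw [Finset.sum_erase_eq_sub (Finset.mem_univ i), hs_def]
    rw [h1, hcard, h3] at h2
    -- h2 : (-a i)^2 ≤ (n-1) * (s - a i ^2)  ⇒ n * a i ^2 ≤ (n-1) s
    have key : (a i) ^ 2 ≤ (((n:ℝ) - 1) * τ) ^ 2 := by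
      have : (n:ℝ) * (a i) ^ 2 ≤ ((n:ℝ) - 1) * s := by nlinarith [sq_nonneg (a i)]
      have hexp : (((n:ℝ) - 1) * τ) ^ 2 = ((n:ℝ) - 1) * s / n := by
        have : (((n:ℝ) - 1) * τ) ^ 2 = ((n:ℝ) - 1) / n * (c * τ ^ 2) := by
          rw [hc_def]; field_simp
        rw [this, hτ2]; ring
      rw [hexp, le_div_iff₀ (by positivity : (0:ℝ) < (n:ℝ))]
      linarith
    have habs : |a i| ≤ ((n:ℝ) - 1) * τ := by
      calc |a i| = Real.sqrt ((a i) ^ 2) := (Real.sqrt_sq_eq_abs _).symm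
        _ ≤ Real.sqrt ((((n:ℝ) - 1) * τ) ^ 2) := Real.sqrt_le_sqrt key
        _ = ((n:ℝ) - 1) * τ := Real.sqrt_sq (mul_nonneg (by linarith) hτ0)
    linarith [neg_abs_le (a i), habs]
  -- Step (b): sum of nonnegative terms
  have hsum : 0 ≤ ∑ i, (a i + ((n:ℝ) - 1) * τ) * (a i - τ) ^ 2 :=
    Finset.sum_nonneg fun i _ => mul_nonneg (by linarith [bound i]) (sq_nonneg _)
  have expand : ∑ i, (a i + ((n:ℝ) - 1) * τ) * (a i - τ) ^ 2 =
      (∑ i, (a i) ^ 3) + ((n:ℝ) - 3) * τ * s - (2 * (n:ℝ) - 3) * τ ^ 2 * (∑ i, a i)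
        + (n:ℝ) * (((n:ℝ) - 1) * τ ^ 3) := by
    have h : ∀ i : Fin n, (a i + ((n:ℝ) - 1) * τ) * (a i - τ) ^ 2 =
        (a i) ^ 3 + ((n:ℝ) - 3) * τ * (a i) ^ 2 - (2 * (n:ℝ) - 3) * τ ^ 2 * (a i)
          + ((n:ℝ) - 1) * τ ^ 3 := fun i => by ring
    rw [Finset.sum_congr rfl fun i _ => h i]
    rw [Finset.sum_add_distrib, Finset.sum_sub_distrib, Finset.sum_add_distrib,
      ← Finset.mul_sum, ← Finset.mul_sum, Finset.sum_const, Finset.card_univ,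
      Fintype.card_fin, nsmul_eq_mul, hs_def]
    try ring
  rw [expand, h0] at hsum
  -- hsum : 0 ≤ Σa³ + (n-3)τs + n(n-1)τ³
  have hτ3 : (n:ℝ) * (((n:ℝ) - 1) * τ ^ 3) = τ * s := by
    have : (n:ℝ) * (((n:ℝ) - 1) * τ ^ 3) = (c * τ ^ 2) * τ := by rw [hc_def]; ring
    rw [this, hτ2]; ring
  rw [hτ3] at hsum
  -- RHS identity
  have hRHS : -((n - 2 : ℝ) / Real.sqrt c) * s ^ ((3 : ℝ) / 2) = -(((n:ℝ) - 2) * (τ * s)) := by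
    have h32 : s ^ ((3:ℝ)/2) = (Real.sqrt s) ^ 3 := by
      rw [Real.sqrt_eq_rpow, ← Real.rpow_natCast (s ^ ((1:ℝ)/2)) 3, ← Real.rpow_mul hs]
      norm_num
    have hτs : τ = Real.sqrt s / Real.sqrt c := by rw [hτ_def, Real.sqrt_div hs]
    have hsq : Real.sqrt s ^ 2 = s := Real.sq_sqrt hs
    have hcpos : 0 < Real.sqrt c := Real.sqrt_pos.mpr hc
    have h3' : (Real.sqrt s) ^ 3 = s * Real.sqrt s := by
      have : (Real.sqrt s) ^ 3 = (Real.sqrt s) ^ 2 * Real.sqrt s := by ring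
      rw [this, hsq]
    rw [h32, h3', hτs]
    field_simp
  push_cast at hRHS ⊢
  rw [hRHS]
  nlinarith [mul_nonneg hτ0 hs]


/-- For a symmetric trace-free `n × n` real matrix `E` (`n ≥ 2`),
`tr(E³) ≥ -((n-2)/√(n(n-1))) · (tr(E²))^{3/2}`. -/
theorem cubic_trace_inequality (n : ℕ) (hn : 2 ≤ n)
    (E : Matrix (Fin n) (Fin n) ℝ) (hsymm : E.IsSymm) (htr : E.trace = 0) :
    (E ^ 3).trace ≥
      -((n - 2 : ℝ) / Real.sqrt (n * (n - 1))) * ((E ^ 2).trace) ^ ((3 : ℝ) / 2) := by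
  have hE : E.IsHermitian := hsymm
  have h1 : (E ^ 1).trace = ∑ i, hE.eigenvalues i ^ 1 := trace_pow_eq_sum n E 1 hE
  have h2 : (E ^ 2).trace = ∑ i, hE.eigenvalues i ^ 2 := trace_pow_eq_sum n E 2 hE
  have h3 : (E ^ 3).trace = ∑ i, hE.eigenvalues i ^ 3 := trace_pow_eq_sum n E 3 hE
  have h0 : ∑ i, hE.eigenvalues i = 0 := by
    have := h1
    rw [pow_one, htr] at this
    simpa [pow_one] using this.symm
  rw [h2, h3]
  exact scalar_cubic n hn hE.eigenvalues h0
end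

section
/- Let $\lambda_1, \dots, \lambda_n$ be real numbers with $\sum_i \lambda_i = 0$ ($n \ge 2$). Then $\sum_i \lambda_i^3 \ge -\frac{n-2}{\sqrt{n(n-1)}} \left( \sum_i \lambda_i^2 \right)^{3/2}$. -/
open scoped BigOperators

/-- If `λ₁, …, λₙ` are reals with `∑ λᵢ = 0` (`n ≥ 2`), then
`∑ λᵢ³ ≥ -((n-2)/√(n(n-1))) (∑ λᵢ²)^{3/2}`. -/
theorem scalar_cubic_inequality (n : ℕ) (hn : 2 ≤ n)
    (l : Fin n → ℝ) (hsum : ∑ i, l i = 0) :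
    ∑ i, (l i) ^ 3 ≥
      -((n - 2 : ℝ) / Real.sqrt (n * (n - 1))) * (∑ i, (l i) ^ 2) ^ ((3 : ℝ) / 2) := by
  have hn1 : (1:ℝ) ≤ (n:ℝ) - 1 := by
    have : (2:ℝ) ≤ (n:ℝ) := by exact_mod_cast hn
    linarith
  set s := ∑ i, (l i) ^ 2 with hs
  have hs0 : 0 ≤ s := Finset.sum_nonneg fun i _ => sq_nonneg _
  set t := Real.sqrt s with ht
  have ht0 : 0 ≤ t := Real.sqrt_nonneg _
  have ht2 : t ^ 2 = s := Real.sq_sqrt hs0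
  set r := Real.sqrt ((n:ℝ) * ((n:ℝ) - 1)) with hr
  have hrpos : 0 < r := Real.sqrt_pos.mpr (by nlinarith)
  have hr2 : r ^ 2 = (n:ℝ) * ((n:ℝ) - 1) := Real.sq_sqrt (by nlinarith)
  set α := t / r with hα
  set β := ((n:ℝ) - 1) * t / r with hβ
  have hβ0 : 0 ≤ β := by
    apply div_nonneg _ hrpos.le
    nlinarith
  -- pointwise lower bound on each l i
  have key : ∀ i : Fin n, -β ≤ l i := by
    intro i
    have hmem := Finset.mem_univ i
    have h1 : ∑ j ∈ Finset.univ.erase i, l j = - l i := by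
      have := Finset.add_sum_erase Finset.univ l hmem
      rw [hsum] at this
      linarith
    have h2 : (∑ j ∈ Finset.univ.erase i, l j) ^ 2
        ≤ (Finset.univ.erase i).card * ∑ j ∈ Finset.univ.erase i, (l j) ^ 2 :=
      sq_sum_le_card_mul_sum_sq
    have hcard : ((Finset.univ.erase i).card : ℝ) = (n:ℝ) - 1 := by
      rw [Finset.card_erase_of_mem hmem, Finset.card_univ, Fintype.card_fin]
      have : (1:ℕ) ≤ n := by omega
      push_cast [this]
      ring
    have h3 : ∑ j ∈ Finset.univ.erase i, (l j) ^ 2 = s - (l i) ^ 2 := by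
      have := Finset.add_sum_erase Finset.univ (fun j => (l j) ^ 2) hmem
      rw [← hs] at this
      linarith
    rw [h1, hcard, h3] at h2
    -- (l i)^2 ≤ (n-1)(s - (l i)^2), so n (l i)^2 ≤ (n-1) s
    have h4 : (n:ℝ) * (l i) ^ 2 ≤ ((n:ℝ) - 1) * s := by nlinarith
    have h5 : (l i) ^ 2 ≤ β ^ 2 := by
      rw [hβ, div_pow, le_div_iff₀ (by positivity), hr2]
      nlinarith
    nlinarith
  have hsum3 : 0 ≤ ∑ i, (l i - α) ^ 2 * (l i + β) :=
    Finset.sum_nonneg fun i _ => mul_nonneg (sq_nonneg _) (by linarith [key i])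
  have expand : ∑ i, (l i - α) ^ 2 * (l i + β)
      = (∑ i, (l i) ^ 3) + (β - 2 * α) * s + (α ^ 2 - 2 * α * β) * (∑ i, l i)
        + (n:ℝ) * (α ^ 2 * β) := by
    have h : ∀ i : Fin n, (l i - α) ^ 2 * (l i + β)
        = (l i) ^ 3 + (β - 2 * α) * (l i) ^ 2 + (α ^ 2 - 2 * α * β) * l i + α ^ 2 * β := by
      intro i; ring
    simp_rw [h, Finset.sum_add_distrib, ← Finset.mul_sum, Finset.sum_const,
      Finset.card_univ, Fintype.card_fin, nsmul_eq_mul, ← hs]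
    ring
  rw [hsum, mul_zero, add_zero] at expand
  have hlb : ∑ i, (l i) ^ 3 ≥ (2 * α - β) * s - (n:ℝ) * (α ^ 2 * β) := by
    rw [expand] at hsum3
    linarith
  have hpow : s ^ ((3:ℝ)/2) = t ^ 3 := by
    rw [show (3:ℝ)/2 = (1/2) * 3 by norm_num, Real.rpow_mul hs0, ← Real.sqrt_eq_rpow,
      show ((3:ℝ)) = ((3:ℕ):ℝ) by norm_num, Real.rpow_natCast]
  rw [hpow, hr]
  rw [← hr]
  have heq : (2 * α - β) * s - (n:ℝ) * (α ^ 2 * β)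
      = -(((n:ℝ) - 2) / r) * t ^ 3 := by
    rw [hα, hβ]
    have hrne : r ≠ 0 := ne_of_gt hrpos
    field_simp
    linear_combination (t ^ 3) * hr2 + (((n:ℝ) - 3) * t * r ^ 2) * ht2
  linarith [hlb, heq.symm.le, heq.le]
end

section
/- Let $\lambda_1, \dots, \lambda_n$ be real numbers with $\sum_i \lambda_i = 0$ ($n \ge 2$), not all zero. Equality $\sum_i \lambda_i^3 = -\frac{n-2}{\sqrt{n(n-1)}} ( \sum_i \lambda_i^2 )^{3/2}$ holds if and only if, after reordering, $\lambda_1 = \cdots = \lambda_{n-1} = \lambda$ and $\lambda_n = -(n-1)\lambda$ for some $\lambda > 0$. -/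
set_option maxHeartbeats 1000000


open scoped BigOperators

/-- For reals `λ₁, …, λₙ` with `∑ λᵢ = 0` (`n ≥ 2`), not all zero, equality
`∑ λᵢ³ = -((n-2)/√(n(n-1))) (∑ λᵢ²)^{3/2}` holds iff, after reordering, `n-1` of them equal
some `λ > 0` and the remaining one equals `-(n-1)λ`. -/
theorem scalar_cubic_equality_case (n : ℕ) (hn : 2 ≤ n)
    (l : Fin n → ℝ) (hsum : ∑ i, l i = 0) (hne : l ≠ 0) :
    (∑ i, (l i) ^ 3 =
        -((n - 2 : ℝ) / Real.sqrt (n * (n - 1))) * (∑ i, (l i) ^ 2) ^ ((3 : ℝ) / 2)) ↔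
      ∃ lam : ℝ, 0 < lam ∧ ∃ i : Fin n,
        l i = -(n - 1 : ℝ) * lam ∧ ∀ j : Fin n, j ≠ i → l j = lam := by
  classical
  set N : ℝ := (n : ℝ) with hN
  clear_value N
  have hN2 : (2:ℝ) ≤ N := by rw [hN]; exact_mod_cast hn
  have hNpos : (0:ℝ) < N := by linarith
  have hN1pos : (0:ℝ) < N - 1 := by linarith
  set s : ℝ := ∑ i, (l i)^2 with hs
  have hspos : 0 < s := by
    obtain ⟨i, hi⟩ := Function.ne_iff.mp hne
    have h1 : 0 < (l i)^2 := lt_of_le_of_ne (sq_nonneg _) (Ne.symm (pow_ne_zero 2 hi))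
    exact lt_of_lt_of_le h1
      (Finset.single_le_sum (fun j _ => sq_nonneg (l j)) (Finset.mem_univ i))
  clear_value s
  set a : ℝ := Real.sqrt (s / (N * (N-1))) with ha
  have hapos : 0 < a := Real.sqrt_pos.mpr (by positivity)
  have ha2 : N * (N-1) * a^2 = s := by
    rw [ha, Real.sq_sqrt (by positivity)]
    field_simp
  have hr2 : (Real.sqrt (N * (N-1)))^2 = N * (N-1) :=
    Real.sq_sqrt (by positivity)
  have hrpos : 0 < Real.sqrt (N * (N-1)) := Real.sqrt_pos.mpr (by positivity)
  have h32 : s ^ ((3:ℝ)/2) = (Real.sqrt s)^3 := by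
    rw [← Real.rpow_natCast (Real.sqrt s) 3, Real.sqrt_eq_rpow, ← Real.rpow_mul hspos.le]
    norm_num
  have hra : Real.sqrt s = Real.sqrt (N * (N-1)) * a := by
    rw [ha, ← Real.sqrt_mul (by positivity)]
    congr 1
    field_simp
  clear_value a
  have hcube : (Real.sqrt (N*(N-1)) * a)^3 = (N*(N-1)) * Real.sqrt (N*(N-1)) * a^3 := by
    linear_combination (Real.sqrt (N*(N-1)) * a^3) * hr2
  have hrhs : -((N - 2) / Real.sqrt (N * (N-1))) * s ^ ((3:ℝ)/2)
      = -((N-2) * (N*(N-1)) * a^3) := by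
    rw [h32, hra, hcube]
    field_simp
  have hconst : ∑ _i : Fin n, (N-1)*a^3 = N * ((N-1)*a^3) := by
    rw [Finset.sum_const, Finset.card_univ, Fintype.card_fin, nsmul_eq_mul, hN]
  have identity : ∑ i, (l i - a)^2 * (l i + (N-1)*a)
      = (∑ i, (l i)^3) + (N-2)*(N*(N-1))*a^3 := by
    calc ∑ i, (l i - a)^2 * (l i + (N-1)*a)
        = ∑ i, ((l i)^3 + (N-3)*a*(l i)^2 + (a^2-2*(N-1)*a^2)*(l i) + (N-1)*a^3) := by
          refine Finset.sum_congr rfl fun i _ => ?_; ring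
      _ = (∑ i, (l i)^3) + (N-3)*a*(∑ i, (l i)^2) + (a^2-2*(N-1)*a^2)*(∑ i, l i)
            + ∑ _i : Fin n, (N-1)*a^3 := by
          rw [Finset.sum_add_distrib, Finset.sum_add_distrib, Finset.sum_add_distrib,
            ← Finset.mul_sum, ← Finset.mul_sum]
      _ = (∑ i, (l i)^3) + (N-3)*a*s + N*((N-1)*a^3) := by
          rw [hconst, hsum, ← hs]; ring
      _ = (∑ i, (l i)^3) + (N-2)*(N*(N-1))*a^3 := by
          linear_combination (3-N)*a*ha2
  have hiff : (∑ i, (l i)^3 = -((N - 2) / Real.sqrt (N * (N-1))) * s ^ ((3:ℝ)/2))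
      ↔ ∑ i, (l i - a)^2 * (l i + (N-1)*a) = 0 := by
    rw [hrhs, identity]
    constructor <;> intro h <;> linarith
  rw [hiff]
  have hcard : ∀ i : Fin n, ((Finset.univ.erase i).card : ℝ) = N - 1 := by
    intro i
    rw [Finset.card_erase_of_mem (Finset.mem_univ i), Finset.card_univ, Fintype.card_fin]
    have h1 : 1 ≤ n := by omega
    rw [hN]
    push_cast [Nat.cast_sub h1]
    ring
  constructor
  · intro h
    have key : ∀ i, -((N-1)*a) ≤ l i := by
      intro i
      have hsum' : ∑ j ∈ Finset.univ.erase i, l j = - l i := by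
        have h1 : l i + ∑ j ∈ Finset.univ.erase i, l j = ∑ j, l j :=
          Finset.add_sum_erase Finset.univ l (Finset.mem_univ i)
        rw [hsum] at h1; linarith
      have hsq' : ∑ j ∈ Finset.univ.erase i, (l j)^2 = s - (l i)^2 := by
        have h1 : (l i)^2 + ∑ j ∈ Finset.univ.erase i, (l j)^2 = ∑ j, (l j)^2 :=
          Finset.add_sum_erase Finset.univ (fun j => (l j)^2) (Finset.mem_univ i)
        rw [← hs] at h1; linarith
      have hc := sq_sum_le_card_mul_sum_sq (s := Finset.univ.erase i) (f := l)
      rw [hsum', hsq', hcard i] at hc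
      have hb : (l i)^2 ≤ ((N-1)*a)^2 := by nlinarith [ha2, hNpos, hN1pos]
      by_contra hcon
      push_neg at hcon
      nlinarith [hb, mul_pos hN1pos hapos]
    have hterms := (Finset.sum_eq_zero_iff_of_nonneg
      (fun i _ => mul_nonneg (sq_nonneg _) (by linarith [key i]))).mp h
    have hvals : ∀ i, l i = a ∨ l i = -(N-1)*a := by
      intro i
      have h0 := hterms i (Finset.mem_univ i)
      rcases mul_eq_zero.mp h0 with h1 | h1
      · left
        have h2 := pow_eq_zero_iff (n := 2) two_ne_zero |>.mp h1
        linarith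
      · right; linarith
    set p : Fin n → Prop := fun i => l i = -(N-1)*a with hp
    set T : Finset (Fin n) := Finset.univ.filter p with hT
    have hsplit := Finset.sum_filter_add_sum_filter_not Finset.univ p l
    have hsum1 : ∑ j ∈ Finset.univ.filter p, l j = (T.card : ℝ) * (-(N-1)*a) := by
      rw [hT, Finset.sum_congr rfl (fun j hj => (Finset.mem_filter.mp hj).2),
        Finset.sum_const, nsmul_eq_mul]
    have hsum2 : ∑ j ∈ Finset.univ.filter (fun i => ¬ p i), l j
        = ((Finset.univ.filter (fun i => ¬ p i)).card : ℝ) * a := by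
      rw [Finset.sum_congr rfl (fun j hj => ?_), Finset.sum_const, nsmul_eq_mul]
      rcases hvals j with h1 | h1
      · exact h1
      · exact absurd h1 (Finset.mem_filter.mp hj).2
    have hcards : T.card + (Finset.univ.filter (fun i => ¬ p i)).card = n := by
      rw [hT, Finset.card_filter_add_card_filter_not, Finset.card_univ,
        Fintype.card_fin]
    have hk1 : T.card = 1 := by
      have hcR : (T.card : ℝ) + ((Finset.univ.filter (fun i => ¬ p i)).card : ℝ) = (n:ℝ) := by
        exact_mod_cast hcards
      rw [hsum1, hsum2, hsum] at hsplit
      have hgoal : (T.card : ℝ) = 1 := by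
        have hca : ((Finset.univ.filter (fun i => ¬ p i)).card : ℝ) = N - T.card := by
          linarith [hN.ge, hN.le]
        rw [hca] at hsplit
        have h1 : a * (N - (T.card : ℝ) * N) = 0 := by linarith [hsplit]
        have h2 : N - (T.card : ℝ) * N = 0 := by
          rcases mul_eq_zero.mp h1 with hx | hx
          · exact absurd hx (ne_of_gt hapos)
          · exact hx
        have h3 : ((T.card : ℝ) - 1) * N = 0 := by linarith
        rcases mul_eq_zero.mp h3 with hx | hx
        · linarith
        · exact absurd hx (ne_of_gt hNpos)
      exact_mod_cast hgoal
    obtain ⟨i, hi⟩ := Finset.card_eq_one.mp hk1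
    refine ⟨a, hapos, i, ?_, ?_⟩
    · have hiT : i ∈ T := by rw [hi]; exact Finset.mem_singleton_self i
      exact (Finset.mem_filter.mp hiT).2
    · intro j hj
      have hjT : j ∉ T := by
        rw [hi]
        simpa using hj
      rcases hvals j with h1 | h1
      · exact h1
      · exact absurd (Finset.mem_filter.mpr ⟨Finset.mem_univ j, h1⟩) hjT
  · rintro ⟨lam, hlam, i, hli, hlj⟩
    have hsval : s = N * (N-1) * lam^2 := by
      have h1 : (l i)^2 + ∑ j ∈ Finset.univ.erase i, (l j)^2 = ∑ j, (l j)^2 :=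
        Finset.add_sum_erase Finset.univ (fun j => (l j)^2) (Finset.mem_univ i)
      have h3 : ∀ j ∈ Finset.univ.erase i, (l j)^2 = lam^2 := fun j hj => by
        rw [hlj j (Finset.mem_erase.mp hj).1]
      have h2 : ∑ j ∈ Finset.univ.erase i, (l j)^2 = (N - 1) * lam^2 := by
        rw [Finset.sum_congr rfl h3, Finset.sum_const, nsmul_eq_mul, hcard i]
      rw [h2, hli] at h1
      rw [hs, ← h1]
      ring
    have haval : a = lam := by
      rw [ha, hsval]
      have h1 : N * (N-1) * lam^2 / (N * (N-1)) = lam^2 := by field_simp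
      rw [h1, Real.sqrt_sq hlam.le]
    apply Finset.sum_eq_zero
    intro j _
    by_cases hji : j = i
    · subst hji
      rw [hli, haval]
      ring
    · rw [hlj j hji, haval]
      ring
end

section
/- Let $V$ be a real inner product space of dimension $n \ge 3$, $E$ a symmetric trace-free bilinear form on $V$, and $R > 0$. With $\mathrm{Rm}$ and $\mathrm{Ric}$ as in the conformally flat decomposition (i.e., $\mathrm{Rm}_{ikjl} = \frac{1}{n-2}(E_{ij}g_{kl} - E_{il}g_{jk} + E_{kl}g_{ij} - E_{jk}g_{il}) + \frac{R}{n(n-1)}(g_{ij}g_{kl} - g_{il}g_{jk})$ and $\mathrm{Ric}_{jk} = E_{jk} + \frac{R}{n}g_{jk}$), one has the inequality $-\mathrm{Rm}_{ikjl}E_{ij}E_{kl} + \mathrm{Ric}_{jk}E_{ij}E_{ik} \ge \frac{1}{n-1}|E|^2 \big( R - \sqrt{n(n-1)}\,|E| \big)$. -/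
open scoped BigOperators

section Auxiliary

lemma aux_trace_pow_eq {n : ℕ} (A : Matrix (Fin n) (Fin n) ℝ) (hA : A.IsHermitian) (k : ℕ) :
    (A ^ k).trace = ∑ i, hA.eigenvalues i ^ k := by
  set U : Matrix (Fin n) (Fin n) ℝ := (hA.eigenvectorUnitary : Matrix (Fin n) (Fin n) ℝ)
    with hUdef
  have hU : star U * U = 1 := by simp [hUdef, Unitary.coe_star_mul_self hA.eigenvectorUnitary]
  have hD : ∀ m : ℕ, (A ^ m)
      = U * (Matrix.diagonal (RCLike.ofReal ∘ hA.eigenvalues)) ^ m * star U := by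
    intro m
    induction m with
    | zero =>
      simp only [pow_zero, Matrix.mul_one]
      rw [show U * star U = 1 by simp [hUdef, Unitary.coe_mul_star_self hA.eigenvectorUnitary]]
    | succ m ih =>
      rw [pow_succ, ih, pow_succ]
      nth_rewrite 2 [hA.spectral_theorem]
      simp only [Unitary.conjStarAlgAut_apply, Matrix.mul_assoc, hUdef]
      rw [← Matrix.mul_assoc (star _) _, hU, Matrix.one_mul]
  rw [hD k, Matrix.trace_mul_comm, ← Matrix.mul_assoc, hU, Matrix.one_mul,
    Matrix.diagonal_pow, Matrix.trace_diagonal]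
  simp

lemma aux_helper_tr3 {n : ℕ} (E : Fin n → Fin n → ℝ) (htr : ∑ i, E i i = 0)
    (f : Fin n → Fin n → ℝ) :
    ∑ x : Fin n, ∑ x1 : Fin n, ∑ x2 : Fin n, f x x2 * E x1 x1 = 0 := by
  refine Finset.sum_eq_zero fun x _ => ?_
  rw [Finset.sum_comm]
  refine Finset.sum_eq_zero fun x2 _ => ?_
  rw [← Finset.mul_sum, htr, mul_zero]

lemma aux_helper_mid {n : ℕ} (E : Fin n → Fin n → ℝ) (htr : ∑ i, E i i = 0)
    (f f' : Fin n → Fin n → ℝ) :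
    ∑ x : Fin n, ∑ x1 : Fin n, ∑ x2 : Fin n, f x1 x2 * E x x * f' x1 x2 = 0 := by
  have h : ∀ x, ∑ x1 : Fin n, ∑ x2 : Fin n, f x1 x2 * E x x * f' x1 x2
      = E x x * ∑ x1 : Fin n, ∑ x2 : Fin n, f x1 x2 * f' x1 x2 := fun x => by
    rw [Finset.mul_sum]
    exact Finset.sum_congr rfl fun x1 _ => by
      rw [Finset.mul_sum]; exact Finset.sum_congr rfl fun x2 _ => by ring
  simp only [h]
  rw [← Finset.sum_mul, htr, zero_mul]

lemma aux_helper_tr2 {n : ℕ} (E : Fin n → Fin n → ℝ) (htr : ∑ i, E i i = 0) (f : Fin n → ℝ) :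
    ∑ x : Fin n, ∑ x1 : Fin n, f x * E x1 x1 = 0 := by
  refine Finset.sum_eq_zero fun x _ => ?_
  rw [← Finset.mul_sum, htr, mul_zero]

/-- The quadruple curvature sum identity. -/
lemma aux_quad_sum (n : ℕ) (R : ℝ)
    (E : Fin n → Fin n → ℝ) (hsymm : ∀ i j, E i j = E j i) (htr : ∑ i, E i i = 0)
    (g : Fin n → Fin n → ℝ) (hg : ∀ i j, g i j = if i = j then 1 else 0)
    (Rm : Fin n → Fin n → Fin n → Fin n → ℝ)
    (hRm : ∀ i k j l, Rm i k j l =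
        (1 / ((n : ℝ) - 2)) *
          (E i j * g k l - E i l * g j k + E k l * g i j - E j k * g i l) +
        (R / ((n : ℝ) * ((n : ℝ) - 1))) * (g i j * g k l - g i l * g j k)) :
    (∑ i, ∑ k, ∑ j, ∑ l, Rm i k j l * E i j * E k l) =
      -(2 / ((n : ℝ) - 2)) * (∑ i, ∑ j, ∑ k, E i j * E j k * E k i)
      - (R / ((n : ℝ) * ((n : ℝ) - 1))) * (∑ i, ∑ j, (E i j)^2) := by
  simp only [hRm, hg]
  simp [mul_ite, ite_mul, mul_zero, zero_mul, mul_one, one_mul, sub_mul, add_mul,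
    Finset.sum_ite_eq, Finset.sum_ite_eq', Finset.sum_add_distrib, Finset.sum_sub_distrib,
    Finset.mul_sum, Finset.sum_mul, mul_sub]
  simp [mul_sub, mul_add, sub_mul, add_mul, mul_ite, ite_mul, mul_zero, zero_mul,
    Finset.sum_sub_distrib, Finset.sum_add_distrib, Finset.sum_ite_eq, Finset.sum_ite_eq']
  have z1 : ∑ x : Fin n, ∑ x1 : Fin n, ∑ x2 : Fin n,
      ((n : ℝ) - 2)⁻¹ * E x x2 * E x x2 * E x1 x1 = 0 :=
    aux_helper_tr3 E htr (fun x x2 => ((n : ℝ) - 2)⁻¹ * E x x2 * E x x2)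
  have z3 : ∑ x : Fin n, ∑ x1 : Fin n, ∑ x2 : Fin n,
      ((n : ℝ) - 2)⁻¹ * E x1 x2 * E x x * E x1 x2 = 0 :=
    aux_helper_mid E htr (fun x1 x2 => ((n : ℝ) - 2)⁻¹ * E x1 x2) (fun x1 x2 => E x1 x2)
  have z5 : ∑ x : Fin n, ∑ x1 : Fin n,
      R / ((n : ℝ) * (n : ℝ) - (n : ℝ)) * E x x * E x1 x1 = 0 :=
    aux_helper_tr2 E htr (fun x => R / ((n : ℝ) * (n : ℝ) - (n : ℝ)) * E x x)
  have c2 : ∑ x : Fin n, ∑ x1 : Fin n, ∑ x2 : Fin n,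
      ((n : ℝ) - 2)⁻¹ * E x x2 * E x x1 * E x1 x2
      = ∑ x : Fin n, ∑ x1 : Fin n, ∑ x2 : Fin n,
        ((n : ℝ) - 2)⁻¹ * (E x x1 * E x1 x2 * E x2 x) := by
    refine Finset.sum_congr rfl fun x _ => Finset.sum_congr rfl fun x1 _ =>
      Finset.sum_congr rfl fun x2 _ => ?_
    rw [hsymm x x2]; ring
  have c4 : ∑ x : Fin n, ∑ x1 : Fin n, ∑ x2 : Fin n,
      ((n : ℝ) - 2)⁻¹ * E x2 x1 * E x x2 * E x1 x
      = ∑ x : Fin n, ∑ x1 : Fin n, ∑ x2 : Fin n,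
        ((n : ℝ) - 2)⁻¹ * (E x x1 * E x1 x2 * E x2 x) := by
    refine Finset.sum_congr rfl fun x _ => ?_
    rw [Finset.sum_comm]
    exact Finset.sum_congr rfl fun a _ => Finset.sum_congr rfl fun b _ => by ring
  have c6 : ∑ x : Fin n, ∑ x1 : Fin n,
      R / ((n : ℝ) * (n : ℝ) - (n : ℝ)) * E x x1 * E x1 x
      = ∑ x : Fin n, ∑ x1 : Fin n, R / ((n : ℝ) * (n : ℝ) - (n : ℝ)) * E x x1 ^ 2 := by
    refine Finset.sum_congr rfl fun x _ => Finset.sum_congr rfl fun x1 _ => ?_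
    rw [hsymm x1 x]; ring
  rw [z1, z3, z5, c2, c4, c6]
  have hD : ∑ x : Fin n, ∑ x1 : Fin n, ∑ x2 : Fin n,
      2 / ((n : ℝ) - 2) * (E x x1 * E x1 x2 * E x2 x)
      = (∑ x : Fin n, ∑ x1 : Fin n, ∑ x2 : Fin n,
        ((n : ℝ) - 2)⁻¹ * (E x x1 * E x1 x2 * E x2 x))
        + ∑ x : Fin n, ∑ x1 : Fin n, ∑ x2 : Fin n,
        ((n : ℝ) - 2)⁻¹ * (E x x1 * E x1 x2 * E x2 x) := by
    rw [← Finset.sum_add_distrib]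
    refine Finset.sum_congr rfl fun x _ => ?_
    rw [← Finset.sum_add_distrib]
    refine Finset.sum_congr rfl fun x1 _ => ?_
    rw [← Finset.sum_add_distrib]
    exact Finset.sum_congr rfl fun x2 _ => by ring
  rw [hD]; ring

/-- The Ricci sum identity. -/
lemma aux_ric_sum (n : ℕ) (R : ℝ)
    (E : Fin n → Fin n → ℝ) (hsymm : ∀ i j, E i j = E j i)
    (g : Fin n → Fin n → ℝ) (hg : ∀ i j, g i j = if i = j then 1 else 0)
    (Ric : Fin n → Fin n → ℝ)
    (hRic : ∀ j k, Ric j k = E j k + (R / (n : ℝ)) * g j k) :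
    (∑ i, ∑ j, ∑ k, Ric j k * E i j * E i k) =
      (∑ i, ∑ j, ∑ k, E i j * E j k * E k i)
      + (R / (n : ℝ)) * (∑ i, ∑ j, (E i j)^2) := by
  simp only [hRic, hg]
  simp [mul_ite, ite_mul, mul_zero, zero_mul, mul_one, one_mul, add_mul,
    Finset.sum_ite_eq, Finset.sum_ite_eq', Finset.sum_add_distrib,
    Finset.mul_sum, Finset.sum_mul]
  congr 1
  · refine Finset.sum_congr rfl fun x _ => Finset.sum_congr rfl fun x1 _ =>
      Finset.sum_congr rfl fun x2 _ => ?_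
    rw [hsymm x x2]; ring
  · refine Finset.sum_congr rfl fun x _ => Finset.sum_congr rfl fun x1 _ => ?_
    ring

/-- Okumura-type sharp cubic inequality for trace-free tuples. -/
lemma aux_cubic_lower {n : ℕ} (hn : 3 ≤ n) (lam : Fin n → ℝ) (h0 : ∑ i, lam i = 0) :
    ∑ i, lam i ^ 3 ≥
      -(((n : ℝ) - 2) * Real.sqrt ((∑ i, lam i ^ 2) / ((n : ℝ) * ((n : ℝ) - 1)))
        * (∑ i, lam i ^ 2)) := by
  have hn3 : (3 : ℝ) ≤ (n : ℝ) := by exact_mod_cast hn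
  have hnpos : (0 : ℝ) < n := by linarith
  have hn1 : (0 : ℝ) < (n : ℝ) - 1 := by linarith
  set S := ∑ i, lam i ^ 2 with hSdef
  have hS : 0 ≤ S := Finset.sum_nonneg fun i _ => sq_nonneg _
  set t := Real.sqrt (S / ((n : ℝ) * ((n : ℝ) - 1))) with htdef
  have ht0 : 0 ≤ t := Real.sqrt_nonneg _
  have ht2 : (n : ℝ) * ((n : ℝ) - 1) * t ^ 2 = S := by
    rw [htdef, Real.sq_sqrt (by positivity)]
    field_simp
  have hbound : ∀ i, lam i + ((n : ℝ) - 1) * t ≥ 0 := by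
    intro i
    have hcard : ((Finset.univ.erase i).card : ℝ) = (n : ℝ) - 1 := by
      rw [Finset.card_erase_of_mem (Finset.mem_univ i)]
      simp [Nat.cast_sub (by omega : 1 ≤ n)]
    have hsum : ∑ j ∈ Finset.univ.erase i, lam j = -lam i := by
      have h := Finset.add_sum_erase Finset.univ lam (Finset.mem_univ i)
      rw [h0] at h; linarith
    have hsq : ∑ j ∈ Finset.univ.erase i, lam j ^ 2 = S - lam i ^ 2 := by
      have h : lam i ^ 2 + ∑ j ∈ Finset.univ.erase i, lam j ^ 2 = S := by
        simpa [hSdef] using Finset.add_sum_erase Finset.univ (fun j => lam j ^ 2)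
          (Finset.mem_univ i)
      linarith
    have hcs := sq_sum_le_card_mul_sum_sq (s := Finset.univ.erase i) (f := lam)
    rw [hsum, hsq, hcard] at hcs
    have h1 : lam i ^ 2 ≤ (((n : ℝ) - 1) * t) ^ 2 := by
      have hns : ((n : ℝ) - 1) * S = ((n : ℝ) - 1) ^ 2 * ((n : ℝ) * t ^ 2) := by
        nlinarith [ht2]
      nlinarith [hcs, hns]
    nlinarith [h1, mul_nonneg (sub_nonneg.2 (by linarith : (1:ℝ) ≤ (n:ℝ) - 1)) ht0, ht0]
  have hpt : ∀ i, 0 ≤ (lam i + ((n : ℝ) - 1) * t) * (lam i - t) ^ 2 := fun i =>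
    mul_nonneg (hbound i) (sq_nonneg _)
  have hexp : ∑ i, (lam i + ((n : ℝ) - 1) * t) * (lam i - t) ^ 2
      = (∑ i, lam i ^ 3) + ((n : ℝ) - 3) * t * S + (3 - 2 * (n : ℝ)) * t ^ 2 * (∑ i, lam i)
        + (n : ℝ) * (((n : ℝ) - 1) * t ^ 3) := by
    have h : ∀ i, (lam i + ((n : ℝ) - 1) * t) * (lam i - t) ^ 2
        = lam i ^ 3 + (((n : ℝ) - 3) * t) * lam i ^ 2
          + ((3 - 2 * (n : ℝ)) * t ^ 2) * lam i + ((n : ℝ) - 1) * t ^ 3 := fun i => by ring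
    simp only [h, Finset.sum_add_distrib, ← Finset.mul_sum, Finset.sum_const,
      Finset.card_univ, Fintype.card_fin, nsmul_eq_mul]
    rw [← hSdef]; ring
  have hsum_nonneg : 0 ≤ ∑ i, (lam i + ((n : ℝ) - 1) * t) * (lam i - t) ^ 2 :=
    Finset.sum_nonneg fun i _ => hpt i
  rw [hexp, h0] at hsum_nonneg
  have hts : (n : ℝ) * (((n : ℝ) - 1) * t ^ 3) = t * S := by nlinarith [ht2]
  nlinarith [hsum_nonneg, hts]

end Auxiliary

/-- With `Rm`, `Ric` the conformally flat curvature data built from a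
symmetric trace-free bilinear form `E` and a constant `R > 0` (components in an
orthonormal basis, `g i j = δᵢⱼ`), one has
`-Rm_{ikjl} E_{ij} E_{kl} + Ric_{jk} E_{ij} E_{ik} ≥ (1/(n-1))|E|²(R - √(n(n-1))|E|)`. -/
theorem conformally_flat_curvature_inequality (n : ℕ) (hn : 3 ≤ n) (R : ℝ) (hR : 0 < R)
    (E : Fin n → Fin n → ℝ) (hsymm : ∀ i j, E i j = E j i) (htr : ∑ i, E i i = 0)
    (g : Fin n → Fin n → ℝ) (hg : ∀ i j, g i j = if i = j then 1 else 0)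
    (Rm : Fin n → Fin n → Fin n → Fin n → ℝ)
    (hRm : ∀ i k j l, Rm i k j l =
        (1 / ((n : ℝ) - 2)) *
          (E i j * g k l - E i l * g j k + E k l * g i j - E j k * g i l) +
        (R / ((n : ℝ) * ((n : ℝ) - 1))) * (g i j * g k l - g i l * g j k))
    (Ric : Fin n → Fin n → ℝ)
    (hRic : ∀ j k, Ric j k = E j k + (R / (n : ℝ)) * g j k) :
    -(∑ i, ∑ k, ∑ j, ∑ l, Rm i k j l * E i j * E k l) +
        (∑ i, ∑ j, ∑ k, Ric j k * E i j * E i k) ≥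
      (1 / ((n : ℝ) - 1)) * (∑ i, ∑ j, (E i j) ^ 2) *
        (R - Real.sqrt ((n : ℝ) * ((n : ℝ) - 1)) * Real.sqrt (∑ i, ∑ j, (E i j) ^ 2)) := by
  have hn3 : (3 : ℝ) ≤ (n : ℝ) := by exact_mod_cast hn
  have hnpos : (0 : ℝ) < n := by linarith
  have hn1 : (0 : ℝ) < (n : ℝ) - 1 := by linarith
  have hn2 : (0 : ℝ) < (n : ℝ) - 2 := by linarith
  set S := ∑ i, ∑ j, (E i j) ^ 2 with hSdef
  set T := ∑ i, ∑ j, ∑ k, E i j * E j k * E k i with hTdef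
  have hS : 0 ≤ S := Finset.sum_nonneg fun i _ => Finset.sum_nonneg fun j _ => sq_nonneg _
  -- eigenvalue setup
  set A : Matrix (Fin n) (Fin n) ℝ := Matrix.of E with hAdef
  have hHerm : A.IsHermitian := by
    show A.conjTranspose = A
    ext i j
    simp [hAdef, Matrix.conjTranspose_apply, hsymm i j]
  set lam := hHerm.eigenvalues with hlamdef
  have h0 : ∑ i, lam i = 0 := by
    have h := aux_trace_pow_eq A hHerm 1
    simp only [pow_one] at h
    have htrA : A.trace = ∑ i, E i i := by simp [Matrix.trace, Matrix.diag, hAdef]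
    rw [htrA, htr] at h
    simpa using h.symm
  have hS2 : ∑ i, lam i ^ 2 = S := by
    have h := aux_trace_pow_eq A hHerm 2
    have htrA : (A ^ 2).trace = ∑ i, ∑ j, E i j * E j i := by
      rw [pow_two]
      simp [Matrix.trace, Matrix.diag, Matrix.mul_apply, hAdef]
    rw [htrA] at h
    rw [← h, hSdef]
    refine Finset.sum_congr rfl fun i _ => Finset.sum_congr rfl fun j _ => ?_
    rw [hsymm j i]; ring
  have hS3 : ∑ i, lam i ^ 3 = T := by
    have h := aux_trace_pow_eq A hHerm 3
    have htrA : (A ^ 3).trace = ∑ i, ∑ j, ∑ k, E i j * E j k * E k i := by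
      rw [pow_succ, pow_two]
      simp only [Matrix.trace, Matrix.diag, Matrix.mul_apply, Finset.sum_mul, hAdef,
        Matrix.of_apply]
      exact Finset.sum_congr rfl fun i _ => Finset.sum_comm
    rw [htrA] at h
    rw [← h, hTdef]
  -- the cubic inequality
  have hcubic := aux_cubic_lower hn lam h0
  rw [hS2, hS3] at hcubic
  -- rewrite the left side
  rw [aux_quad_sum n R E hsymm htr g hg Rm hRm, aux_ric_sum n R E hsymm g hg Ric hRic,
    ← hSdef, ← hTdef]
  set t := Real.sqrt (S / ((n : ℝ) * ((n : ℝ) - 1))) with htdef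
  have ht0 : 0 ≤ t := Real.sqrt_nonneg _
  have ht2 : (n : ℝ) * ((n : ℝ) - 1) * t ^ 2 = S := by
    rw [htdef, Real.sq_sqrt (by positivity)]
    field_simp
  have hcpos : (0 : ℝ) < (n : ℝ) * ((n : ℝ) - 1) := mul_pos hnpos hn1
  have hsqc : (0 : ℝ) < Real.sqrt ((n : ℝ) * ((n : ℝ) - 1)) := Real.sqrt_pos.2 hcpos
  have hts : Real.sqrt S = t * Real.sqrt ((n : ℝ) * ((n : ℝ) - 1)) := by
    rw [htdef, Real.sqrt_div hS, div_mul_cancel₀ _ (ne_of_gt hsqc)]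
  have hq : Real.sqrt ((n : ℝ) * ((n : ℝ) - 1)) * Real.sqrt ((n : ℝ) * ((n : ℝ) - 1))
      = (n : ℝ) * ((n : ℝ) - 1) := Real.mul_self_sqrt (le_of_lt hcpos)
  have goal_eq : -(-(2 / ((n : ℝ) - 2)) * T - (R / ((n : ℝ) * ((n : ℝ) - 1))) * S)
      + (T + (R / (n : ℝ)) * S) = ((n : ℝ) / ((n : ℝ) - 2)) * T + (R / ((n : ℝ) - 1)) * S := by
    field_simp
    ring
  rw [goal_eq]
  have rhs_eq : 1 / ((n : ℝ) - 1) * S * (R - Real.sqrt ((n : ℝ) * ((n : ℝ) - 1)) * Real.sqrt S)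
      = R / ((n : ℝ) - 1) * S - (n : ℝ) * t * S := by
    rw [hts, show Real.sqrt ((n : ℝ) * ((n : ℝ) - 1)) * (t * Real.sqrt ((n : ℝ) * ((n : ℝ) - 1)))
      = ((n : ℝ) * ((n : ℝ) - 1)) * t by rw [mul_comm t, ← mul_assoc, hq]]
    field_simp
  rw [rhs_eq]
  have key : ((n : ℝ) / ((n : ℝ) - 2)) * T ≥ -((n : ℝ) * t * S) := by
    have h1 : ((n : ℝ) / ((n : ℝ) - 2)) * (-(((n : ℝ) - 2) * t * S))
        ≤ ((n : ℝ) / ((n : ℝ) - 2)) * T :=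
      mul_le_mul_of_nonneg_left hcubic (le_of_lt (div_pos hnpos hn2))
    have h2 : ((n : ℝ) / ((n : ℝ) - 2)) * (-(((n : ℝ) - 2) * t * S))
        = -((n : ℝ) * t * S) := by
      field_simp
    linarith [h1, h2 ▸ h1]
  linarith [key]
end

section
/- Let $T'$ be a symmetric $2$-tensor on an inner product space $V$ of dimension $n$, diagonalizable with orthonormal eigenbasis $e_1,\dots,e_n$ and eigenvalues $\lambda_1,\dots,\lambda_n$, and let $\mathrm{Rm}$ be an algebraic curvature tensor with Ricci contraction $\mathrm{Ric}$. Then $-\mathrm{Rm}_{ikjl}T'_{ij}T'_{kl} + \mathrm{Ric}_{jk}T'_{ij}T'_{ik} = \frac{1}{2}\sum_{i,j} \mathrm{Rm}(e_i,e_j,e_i,e_j)(\lambda_i - \lambda_j)^2$. -/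
open scoped BigOperators

/-- For a symmetric 2-tensor `T'` diagonal in an orthonormal basis with
eigenvalues `λᵢ`, and an algebraic curvature tensor `Rm` with Ricci contraction `Ric`,
`-Rm_{ikjl} T'_{ij} T'_{kl} + Ric_{jk} T'_{ij} T'_{ik}
  = ½ ∑_{i,j} Rm(eᵢ,eⱼ,eᵢ,eⱼ) (λᵢ - λⱼ)²`. -/
theorem curvature_quadratic_form_eigenvalues (n : ℕ)
    (Rm : Fin n → Fin n → Fin n → Fin n → ℝ)
    (hA1 : ∀ a b c d, Rm a b c d = -Rm b a c d)
    (hA2 : ∀ a b c d, Rm a b c d = -Rm a b d c)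
    (hPair : ∀ a b c d, Rm a b c d = Rm c d a b)
    (hBianchi : ∀ a b c d, Rm a b c d + Rm b c a d + Rm c a b d = 0)
    (Ric : Fin n → Fin n → ℝ) (hRic : ∀ j k, Ric j k = ∑ i, Rm i j i k)
    (l : Fin n → ℝ) (T : Fin n → Fin n → ℝ)
    (hT : ∀ i j, T i j = if i = j then l i else 0) :
    -(∑ i, ∑ k, ∑ j, ∑ m, Rm i k j m * T i j * T k m) +
        (∑ i, ∑ j, ∑ k, Ric j k * T i j * T i k) =
      (1 / 2) * ∑ i, ∑ j, Rm i j i j * (l i - l j) ^ 2 := by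
  have hsym : ∀ a b, Rm b a b a = Rm a b a b := fun a b => by
    rw [hA1 b a b a, hA2 a b b a]; ring
  simp only [hT, hRic, mul_ite, mul_zero, ite_mul, zero_mul,
    Finset.sum_ite_eq, Finset.sum_ite_eq', Finset.mem_univ, if_true,
    Finset.sum_mul, Finset.mul_sum]
  have lhs_eq : -∑ x : Fin n, ∑ y : Fin n, Rm x y x y * l x * l y
      + ∑ x : Fin n, ∑ i : Fin n, Rm i x i x * l x * l x
      = ∑ x : Fin n, ∑ i : Fin n, Rm x i x i * (l x ^ 2 - l x * l i) := by
    rw [neg_add_eq_sub, ← Finset.sum_sub_distrib]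
    refine Finset.sum_congr rfl fun x _ => ?_
    rw [← Finset.sum_sub_distrib]
    refine Finset.sum_congr rfl fun i _ => ?_
    rw [hsym x i]; ring
  have expand : ∑ x : Fin n, ∑ i : Fin n, Rm x i x i * (l x - l i) ^ 2
      = (∑ x : Fin n, ∑ i : Fin n, Rm x i x i * (l x ^ 2 - l x * l i))
        + ∑ x : Fin n, ∑ i : Fin n, Rm x i x i * (l i ^ 2 - l x * l i) := by
    rw [← Finset.sum_add_distrib]
    refine Finset.sum_congr rfl fun x _ => ?_
    rw [← Finset.sum_add_distrib]
    refine Finset.sum_congr rfl fun i _ => ?_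
    ring
  have comm2 : ∑ x : Fin n, ∑ i : Fin n, Rm x i x i * (l i ^ 2 - l x * l i)
      = ∑ x : Fin n, ∑ i : Fin n, Rm i x i x * (l x ^ 2 - l i * l x) := Finset.sum_comm
  have comm2' : ∑ x : Fin n, ∑ i : Fin n, Rm i x i x * (l x ^ 2 - l i * l x)
      = ∑ x : Fin n, ∑ i : Fin n, Rm x i x i * (l x ^ 2 - l x * l i) := by
    refine Finset.sum_congr rfl fun x _ => Finset.sum_congr rfl fun i _ => ?_
    rw [hsym i x]; ring
  have rhs_eq : ∑ x : Fin n, ∑ i : Fin n, 1 / 2 * (Rm x i x i * (l x - l i) ^ 2)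
      = (1/2) * ∑ x : Fin n, ∑ i : Fin n, Rm x i x i * (l x - l i) ^ 2 := by
    rw [Finset.mul_sum]
    exact Finset.sum_congr rfl fun x _ => (Finset.mul_sum _ _ _).symm
  rw [lhs_eq, rhs_eq, expand, comm2, comm2']
  ring
end

section
/- Let $V$ be an $n$-dimensional real inner product space, $n \ge 3$, and let $E$ be a nonzero symmetric trace-free bilinear form on $V$ with $R > 0$ such that the conformally flat curvature quadratic form attains equality: $-\mathrm{Rm}_{ikjl}E_{ij}E_{kl} + \mathrm{Ric}_{jk}E_{ij}E_{ik} = \frac{1}{n-1}|E|^2(R - \sqrt{n(n-1)}|E|)$, where $\mathrm{Rm}_{ikjl} = \frac{1}{n-2}(E_{ij}g_{kl} - E_{il}g_{jk} + E_{kl}g_{ij} - E_{jk}g_{il}) + \frac{R}{n(n-1)}(g_{ij}g_{kl} - g_{il}g_{jk})$ and $\mathrm{Ric} = E + \frac{R}{n} g$. Then $E$ has an eigenvalue of multiplicity $n-1$ and another eigenvalue of multiplicity $1$. -/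
set_option maxHeartbeats 4000000


open scoped BigOperators

section AuxEqualityCase
open Finset Module Matrix


lemma eig_bound (n : ℕ) (hn : 3 ≤ n) (l : Fin n → ℝ) (h1 : ∑ i, l i = 0) (i : Fin n) :
    (n : ℝ) * (l i)^2 ≤ ((n : ℝ) - 1) * ∑ j, (l j)^2 := by
  have hli : l i = -∑ j ∈ univ.erase i, l j := by
    have := Finset.add_sum_erase univ l (mem_univ i)
    rw [h1] at this; linarith
  have hcs : (∑ j ∈ univ.erase i, l j)^2 ≤ (#(univ.erase i) : ℝ) * ∑ j ∈ univ.erase i, (l j)^2 :=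
    sq_sum_le_card_mul_sum_sq
  have hcard : (#(univ.erase i) : ℝ) = (n : ℝ) - 1 := by
    rw [card_erase_of_mem (mem_univ i), card_univ, Fintype.card_fin]
    have h1n : 1 ≤ n := by omega
    push_cast [Nat.cast_sub h1n]; ring
  have hsplit : ∑ j ∈ univ.erase i, (l j)^2 = (∑ j, (l j)^2) - (l i)^2 := by
    have := Finset.add_sum_erase univ (fun j => (l j)^2) (mem_univ i)
    linarith
  have h2 : (l i)^2 ≤ ((n:ℝ) - 1) * ((∑ j, (l j)^2) - (l i)^2) := by
    calc (l i)^2 = (∑ j ∈ univ.erase i, l j)^2 := by rw [hli]; ring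
    _ ≤ ((n : ℝ) - 1) * ∑ j ∈ univ.erase i, (l j)^2 := by rw [← hcard]; exact hcs
    _ = ((n:ℝ) - 1) * ((∑ j, (l j)^2) - (l i)^2) := by rw [hsplit]
  nlinarith

lemma eig_char (n : ℕ) (hn : 3 ≤ n) (l : Fin n → ℝ) (h1 : ∑ i, l i = 0)
    (hS : 0 < ∑ i, (l i)^2)
    (h3 : ∑ i, (l i)^3 = -(((n:ℝ)-2) / Real.sqrt ((n:ℝ)*((n:ℝ)-1))) *
      ((∑ i, (l i)^2) * Real.sqrt (∑ i, (l i)^2))) :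
    ∃ μ ν : ℝ, μ ≠ ν ∧ #{i | l i = μ} = n - 1 ∧ #{i | l i = ν} = 1 := by
  classical
  set S := ∑ i, (l i)^2 with hSdef
  have hn3 : (3:ℝ) ≤ (n:ℝ) := by exact_mod_cast hn
  have hnn1 : 0 < (n:ℝ) * ((n:ℝ) - 1) := by nlinarith
  have hsq : 0 < Real.sqrt ((n:ℝ) * ((n:ℝ)-1)) := Real.sqrt_pos.mpr hnn1
  set μ := Real.sqrt S / Real.sqrt ((n:ℝ)*((n:ℝ)-1)) with hμdef
  have hμpos : 0 < μ := div_pos (Real.sqrt_pos.mpr hS) hsq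
  have hμsq : (n:ℝ) * ((n:ℝ)-1) * μ^2 = S := by
    rw [hμdef, div_pow, Real.sq_sqrt hS.le, Real.sq_sqrt hnn1.le]
    field_simp
    exact div_self (ne_of_gt (by linarith))
  have hμS : ((n:ℝ)-2) * μ * S = -(∑ i, (l i)^3) := by
    rw [h3, hμdef]
    field_simp
  -- each eigenvalue bounded below by -(n-1)μ
  have hlow : ∀ i, 0 ≤ l i + ((n:ℝ)-1) * μ := by
    intro i
    have hb := eig_bound n hn l h1 i
    have h2 : (l i)^2 ≤ (((n:ℝ)-1)*μ)^2 := by nlinarith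
    have hc2 : 0 < ((n:ℝ)-1)*μ := by nlinarith
    by_contra hc
    push_neg at hc
    have hf1 : (0:ℝ) < -(l i + ((n:ℝ)-1)*μ) := by linarith
    have hf2 : (0:ℝ) < -(l i - ((n:ℝ)-1)*μ) := by linarith
    nlinarith [mul_pos hf1 hf2]
  -- the key identity
  have hid : ∑ i, (l i - μ)^2 * (l i + ((n:ℝ)-1)*μ) = 0 := by
    have hexp : ∑ i, (l i - μ)^2 * (l i + ((n:ℝ)-1)*μ)
        = (∑ i, (l i)^3) + ((n:ℝ)-3)*μ*S + (1 - 2*((n:ℝ)-1))*μ^2 * (∑ i, l i)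
          + (n:ℝ)*(((n:ℝ)-1)*μ^3) := by
      rw [Finset.sum_congr rfl (fun i _ => by ring :
        ∀ i ∈ Finset.univ, (l i - μ)^2 * (l i + ((n:ℝ)-1)*μ)
          = (l i)^3 + (((n:ℝ)-3)*μ) * (l i)^2 + ((1 - 2*((n:ℝ)-1))*μ^2) * l i
            + ((n:ℝ)-1)*μ^3)]
      simp only [Finset.sum_add_distrib, ← Finset.mul_sum, Finset.sum_const,
        Finset.card_univ, Fintype.card_fin, nsmul_eq_mul]
      ring
    rw [hexp, h1]
    have : (n:ℝ)*(((n:ℝ)-1)*μ^3) = S * μ := by nlinarith [hμsq]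
    rw [this]
    nlinarith [hμS]
  have hall : ∀ i ∈ Finset.univ, (l i - μ)^2 * (l i + ((n:ℝ)-1)*μ) = 0 := by
    rw [← Finset.sum_eq_zero_iff_of_nonneg]
    · exact hid
    · intro i _
      exact mul_nonneg (sq_nonneg _) (hlow i)
  set ν := -(((n:ℝ)-1)*μ) with hνdef
  have hcases : ∀ i, l i = μ ∨ l i = ν := by
    intro i
    rcases mul_eq_zero.mp (hall i (Finset.mem_univ i)) with h | h
    · left; have := sq_eq_zero_iff.mp h; linarith
    · right; rw [hνdef]; linarith
  have hμν : μ ≠ ν := by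
    rw [hνdef]; intro h; nlinarith
  set A := ({i | l i = μ} : Finset (Fin n)) with hA
  set B := ({i | l i = ν} : Finset (Fin n)) with hB
  have hBeq : Finset.univ.filter (fun i => ¬ l i = μ) = B := by
    ext i
    simp only [Finset.mem_filter, Finset.mem_univ, true_and, hB, Finset.mem_filter]
    constructor
    · intro h; rcases hcases i with h' | h'
      · exact absurd h' h
      · exact h'
    · intro h hm; exact hμν (hm ▸ h.symm ▸ rfl)
  have hAeq : Finset.univ.filter (fun i => l i = μ) = A := by
    ext i; simp [hA]
  have hcard : #A + #B = n := by
    rw [← hAeq, ← hBeq, Finset.card_filter_add_card_filter_not, Finset.card_univ,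
      Fintype.card_fin]
  have hsum : (#A : ℝ) * μ + (#B : ℝ) * ν = 0 := by
    rw [← h1, ← Finset.sum_filter_add_sum_filter_not Finset.univ (fun i => l i = μ) l,
      hAeq, hBeq]
    have e1 : ∀ i ∈ A, l i = μ := by
      intro i hi; rw [hA, Finset.mem_filter] at hi; exact hi.2
    have e2 : ∀ i ∈ B, l i = ν := by
      intro i hi; rw [hB, Finset.mem_filter] at hi; exact hi.2
    rw [Finset.sum_congr rfl e1, Finset.sum_congr rfl e2, Finset.sum_const, Finset.sum_const]
    simp only [nsmul_eq_mul]
  have hcastn : (#A : ℝ) + (#B : ℝ) = (n : ℝ) := by exact_mod_cast hcard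
  have hB1 : (#B : ℝ) = 1 := by
    rw [hνdef] at hsum
    have ha2 : (#A : ℝ) = (#B : ℝ) * ((n:ℝ) - 1) :=
      mul_right_cancel₀ (ne_of_gt hμpos) (by linarith : (#A:ℝ)*μ = ((#B:ℝ)*((n:ℝ)-1))*μ)
    have hbn : (#B:ℝ) * (n:ℝ) = (n:ℝ) := by linear_combination hcastn - ha2
    have hn0 : (n:ℝ) ≠ 0 := by linarith
    exact mul_right_cancel₀ hn0 (by linarith : (#B:ℝ) * (n:ℝ) = 1 * (n:ℝ))
  have hBn : #B = 1 := by exact_mod_cast hB1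
  have hAn : #A = n - 1 := by omega
  exact ⟨μ, ν, hμν, hAn, hBn⟩

lemma eigensp_lower (n : ℕ) (E : Matrix (Fin n) (Fin n) ℝ) (hE : E.IsHermitian) (t : ℝ) :
    #{i | hE.eigenvalues i = t} ≤
      finrank ℝ (Module.End.eigenspace (Matrix.toLin' E) t) := by
  classical
  set egs := Module.End.eigenspace (Matrix.toLin' E) t with hegs
  have hmem : ∀ i : {i // hE.eigenvalues i = t}, (⇑(hE.eigenvectorBasis i.1) : Fin n → ℝ) ∈ egs := by
    rintro ⟨i, hi⟩
    rw [hegs, Module.End.mem_eigenspace_iff, Matrix.toLin'_apply, hE.mulVec_eigenvectorBasis, hi]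
  have hli : LinearIndependent ℝ (fun i : Fin n => (⇑(hE.eigenvectorBasis i) : Fin n → ℝ)) :=
    hE.eigenvectorBasis.orthonormal.linearIndependent.map'
      (WithLp.linearEquiv 2 ℝ (Fin n → ℝ)).toLinearMap (LinearEquiv.ker _)
  have hli2 : LinearIndependent ℝ
      (fun i : {i // hE.eigenvalues i = t} => (⇑(hE.eigenvectorBasis i.1) : Fin n → ℝ)) :=
    hli.comp Subtype.val Subtype.val_injective
  let w : {i // hE.eigenvalues i = t} → egs := fun i => ⟨_, hmem i⟩
  have hliw : LinearIndependent ℝ w := by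
    apply LinearIndependent.of_comp egs.subtype
    exact hli2
  have := hliw.fintype_card_le_finrank
  rwa [Fintype.card_subtype] at this

lemma eigensp_disjoint (n : ℕ) (f : Module.End ℝ (Fin n → ℝ)) {μ ν : ℝ} (h : μ ≠ ν) :
    Disjoint (Module.End.eigenspace f μ) (Module.End.eigenspace f ν) := by
  rw [Submodule.disjoint_def]
  intro x hx hy
  rw [Module.End.mem_eigenspace_iff] at hx hy
  have : (μ - ν) • x = 0 := by rw [sub_smul, ← hx, ← hy, sub_self]
  rcases smul_eq_zero.mp this with h' | h'
  · exact absurd (sub_eq_zero.mp h') h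
  · exact h'

lemma eigensp_exact (n : ℕ) (E : Matrix (Fin n) (Fin n) ℝ) (hE : E.IsHermitian)
    (μ ν : ℝ) (hμν : μ ≠ ν) (hμ : #{i | hE.eigenvalues i = μ} = n - 1)
    (hν : #{i | hE.eigenvalues i = ν} = 1) (hn : 3 ≤ n) :
    finrank ℝ (Module.End.eigenspace (Matrix.toLin' E) μ) = n - 1 ∧
    finrank ℝ (Module.End.eigenspace (Matrix.toLin' E) ν) = 1 := by
  have h1 := eigensp_lower n E hE μ
  have h2 := eigensp_lower n E hE ν
  rw [hμ] at h1; rw [hν] at h2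
  set p := Module.End.eigenspace (Matrix.toLin' E) μ
  set q := Module.End.eigenspace (Matrix.toLin' E) ν
  have hd : Disjoint p q := eigensp_disjoint n _ hμν
  have hsum : finrank ℝ p + finrank ℝ q ≤ n := by
    have h3 := Submodule.finrank_sup_add_finrank_inf_eq p q
    rw [hd.eq_bot, finrank_bot, add_zero] at h3
    have h4 : finrank ℝ ↑(p ⊔ q) ≤ finrank ℝ (Fin n → ℝ) := Submodule.finrank_le _
    rw [Module.finrank_pi] at h4
    simp only [Fintype.card_fin] at h4
    omega
  omega

lemma conj_trace (U : Matrix.unitaryGroup (Fin n) ℝ) (M : Matrix (Fin n) (Fin n) ℝ) :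
    Matrix.trace ((U : Matrix (Fin n) (Fin n) ℝ) * M * star (U : Matrix (Fin n) (Fin n) ℝ))
      = Matrix.trace M := by
  rw [Matrix.trace_mul_cycle, (Matrix.mem_unitaryGroup_iff').mp U.2, one_mul]

lemma uconj_mul (U : Matrix.unitaryGroup (Fin n) ℝ) (A B : Matrix (Fin n) (Fin n) ℝ) :
    ((U : Matrix (Fin n) (Fin n) ℝ) * A * star (U : Matrix (Fin n) (Fin n) ℝ)) *
      ((U : Matrix (Fin n) (Fin n) ℝ) * B * star (U : Matrix (Fin n) (Fin n) ℝ))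
      = (U : Matrix (Fin n) (Fin n) ℝ) * (A * B) * star (U : Matrix (Fin n) (Fin n) ℝ) := by
  have hUU : star (U : Matrix (Fin n) (Fin n) ℝ) * (U : Matrix (Fin n) (Fin n) ℝ) = 1 :=
    (Matrix.mem_unitaryGroup_iff').mp U.2
  calc ((U : Matrix (Fin n) (Fin n) ℝ) * A * star (U : Matrix (Fin n) (Fin n) ℝ)) *
      ((U : Matrix (Fin n) (Fin n) ℝ) * B * star (U : Matrix (Fin n) (Fin n) ℝ))
      = (U : Matrix (Fin n) (Fin n) ℝ) *
        (A * ((star (U : Matrix (Fin n) (Fin n) ℝ) * (U : Matrix (Fin n) (Fin n) ℝ)) *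
          (B * star (U : Matrix (Fin n) (Fin n) ℝ)))) := by
        simp only [Matrix.mul_assoc]
    _ = _ := by rw [hUU, one_mul, Matrix.mul_assoc, Matrix.mul_assoc]

lemma eig_traces (E : Matrix (Fin n) (Fin n) ℝ) (hE : E.IsHermitian) :
    (∑ i, hE.eigenvalues i = ∑ i, E i i) ∧
    (∑ i, (hE.eigenvalues i)^2 = ∑ i, ∑ j, E i j * E j i) ∧
    (∑ i, (hE.eigenvalues i)^3 = ∑ i, ∑ j, ∑ k, E i j * E j k * E k i) := by
  set U := hE.eigenvectorUnitary with hU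
  set D : Matrix (Fin n) (Fin n) ℝ := Matrix.diagonal (RCLike.ofReal ∘ hE.eigenvalues) with hD
  have hspec : E = (U : Matrix (Fin n) (Fin n) ℝ) * D * star (U : Matrix (Fin n) (Fin n) ℝ) :=
    hE.spectral_theorem
  have hDdiag : D = Matrix.diagonal hE.eigenvalues := by
    rw [hD]; congr 1
  have h1 : Matrix.trace E = ∑ i, hE.eigenvalues i := by
    conv_lhs => rw [hspec]
    rw [conj_trace, hDdiag, Matrix.trace_diagonal]
  have h2 : Matrix.trace (E * E) = ∑ i, (hE.eigenvalues i)^2 := by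
    conv_lhs => rw [hspec]
    rw [uconj_mul, conj_trace, hDdiag, Matrix.diagonal_mul_diagonal,
      Matrix.trace_diagonal]
    exact Finset.sum_congr rfl fun i _ => (sq _).symm
  have h3 : Matrix.trace (E * E * E) = ∑ i, (hE.eigenvalues i)^3 := by
    conv_lhs => rw [hspec]
    rw [uconj_mul, uconj_mul, conj_trace, hDdiag, Matrix.diagonal_mul_diagonal,
      Matrix.diagonal_mul_diagonal, Matrix.trace_diagonal]
    exact Finset.sum_congr rfl fun i _ => by ring
  refine ⟨by rw [← h1]; rfl, ?_, ?_⟩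
  · rw [← h2, Matrix.trace]
    exact Finset.sum_congr rfl fun i _ => by
      rw [Matrix.diag_apply, Matrix.mul_apply]
  · rw [← h3, Matrix.trace]
    refine Finset.sum_congr rfl fun i _ => ?_
    rw [Matrix.diag_apply, Matrix.mul_apply]
    rw [Finset.sum_congr rfl (fun k (_ : k ∈ Finset.univ) => by
      rw [Matrix.mul_apply, Finset.sum_mul] :
      ∀ k ∈ Finset.univ, (E * E) i k * E k i = ∑ j, E i j * E j k * E k i)]
    exact Finset.sum_comm

lemma quad_sum (n : ℕ) (R : ℝ)
    (E : Matrix (Fin n) (Fin n) ℝ) (hsymm : E.IsSymm) (htr : ∑ i, E i i = 0)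
    (g : Fin n → Fin n → ℝ) (hg : ∀ i j, g i j = if i = j then 1 else 0)
    (Rm : Fin n → Fin n → Fin n → Fin n → ℝ)
    (hRm : ∀ i k j l, Rm i k j l =
        (1 / ((n : ℝ) - 2)) *
          (E i j * g k l - E i l * g j k + E k l * g i j - E j k * g i l) +
        (R / ((n : ℝ) * ((n : ℝ) - 1))) * (g i j * g k l - g i l * g j k)) :
    (∑ i, ∑ k, ∑ j, ∑ l, Rm i k j l * E i j * E k l) =
      -(2/((n:ℝ)-2)) * (∑ i, ∑ j, ∑ k, E i j * E j k * E k i)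
      - (R/((n:ℝ)*((n:ℝ)-1))) * (∑ i, ∑ j, (E i j)^2) := by
  have hsym : ∀ i j, E i j = E j i := fun i j => Matrix.IsSymm.apply hsymm j i
  simp only [hRm, hg, mul_ite, ite_mul, mul_one, mul_zero, one_mul, zero_mul,
    sub_mul, add_mul, mul_sub, mul_add, Finset.sum_add_distrib, Finset.sum_sub_distrib,
    Finset.sum_ite_irrel, Finset.sum_const_zero,
    Finset.sum_ite_eq, Finset.sum_ite_eq', Finset.mem_univ, if_true]
  have e1 : ∑ x : Fin n, ∑ y : Fin n, ∑ z : Fin n,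
      1/((n:ℝ)-2) * E x z * E x z * E y y = 0 := by
    refine Finset.sum_eq_zero fun x _ => ?_
    rw [Finset.sum_comm]
    refine Finset.sum_eq_zero fun z _ => ?_
    rw [← Finset.mul_sum, htr, mul_zero]
  have e3 : ∑ x : Fin n, ∑ y : Fin n, ∑ z : Fin n,
      1/((n:ℝ)-2) * E y z * E x x * E y z = 0 := by
    have h : ∀ x : Fin n, (∑ y : Fin n, ∑ z : Fin n, 1/((n:ℝ)-2) * E y z * E x x * E y z)
        = E x x * ∑ y : Fin n, ∑ z : Fin n, 1/((n:ℝ)-2) * E y z * E y z := by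
      intro x
      rw [Finset.mul_sum]
      refine Finset.sum_congr rfl fun y _ => ?_
      rw [Finset.mul_sum]
      exact Finset.sum_congr rfl fun z _ => by ring
    rw [Finset.sum_congr rfl fun x _ => h x, ← Finset.sum_mul, htr, zero_mul]
  have e5 : ∑ x : Fin n, ∑ y : Fin n,
      R/((n:ℝ)*(n:ℝ)-(n:ℝ)) * E x x * E y y = 0 := by
    refine Finset.sum_eq_zero fun x _ => ?_
    rw [← Finset.mul_sum, htr, mul_zero]
  have e2 : ∑ x : Fin n, ∑ y : Fin n, ∑ z : Fin n,
      1/((n:ℝ)-2) * E x z * E x y * E y z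
      = 1/((n:ℝ)-2) * ∑ i : Fin n, ∑ j : Fin n, ∑ k : Fin n, E i j * E j k * E k i := by
    rw [Finset.mul_sum]
    refine Finset.sum_congr rfl fun x _ => ?_
    rw [Finset.mul_sum]
    refine Finset.sum_congr rfl fun y _ => ?_
    rw [Finset.mul_sum]
    refine Finset.sum_congr rfl fun z _ => ?_
    rw [hsym x z]; ring
  have e4 : ∑ x : Fin n, ∑ y : Fin n, ∑ z : Fin n,
      1/((n:ℝ)-2) * E z y * E x z * E y x
      = 1/((n:ℝ)-2) * ∑ i : Fin n, ∑ j : Fin n, ∑ k : Fin n, E i j * E j k * E k i := by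
    rw [Finset.mul_sum]
    refine Finset.sum_congr rfl fun x _ => ?_
    rw [Finset.sum_comm, Finset.mul_sum]
    refine Finset.sum_congr rfl fun z _ => ?_
    rw [Finset.mul_sum]
    refine Finset.sum_congr rfl fun y _ => ?_
    ring
  have e6 : ∑ x : Fin n, ∑ y : Fin n,
      R/((n:ℝ)*(n:ℝ)-(n:ℝ)) * E x y * E y x
      = R/((n:ℝ)*(n:ℝ)-(n:ℝ)) * ∑ i : Fin n, ∑ j : Fin n, (E i j)^2 := by
    rw [Finset.mul_sum]
    refine Finset.sum_congr rfl fun x _ => ?_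
    rw [Finset.mul_sum]
    refine Finset.sum_congr rfl fun y _ => ?_
    rw [hsym y x]; ring
  rw [e1, e2, e3, e4, e5, e6]
  ring

lemma ric_sum (n : ℕ) (R : ℝ)
    (E : Matrix (Fin n) (Fin n) ℝ) (hsymm : E.IsSymm)
    (g : Fin n → Fin n → ℝ) (hg : ∀ i j, g i j = if i = j then 1 else 0)
    (Ric : Fin n → Fin n → ℝ)
    (hRic : ∀ j k, Ric j k = E j k + (R / (n : ℝ)) * g j k) :
    ∑ i, ∑ j, ∑ k, Ric j k * E i j * E i k =
      (∑ i, ∑ j, ∑ k, E i j * E j k * E k i) + (R/(n:ℝ)) * (∑ i, ∑ j, (E i j)^2) := by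
  have hsym : ∀ i j, E i j = E j i := fun i j => Matrix.IsSymm.apply hsymm j i
  simp only [hRic, hg, mul_ite, ite_mul, mul_one, mul_zero, one_mul, zero_mul,
    sub_mul, add_mul, mul_sub, mul_add, Finset.sum_add_distrib, Finset.sum_sub_distrib,
    Finset.sum_ite_irrel, Finset.sum_const_zero,
    Finset.sum_ite_eq, Finset.sum_ite_eq', Finset.mem_univ, if_true]
  congr 1
  · refine Finset.sum_congr rfl fun i _ => ?_
    refine Finset.sum_congr rfl fun j _ => ?_
    refine Finset.sum_congr rfl fun k _ => ?_
    rw [hsym i k]; ring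
  · rw [Finset.mul_sum]
    refine Finset.sum_congr rfl fun i _ => ?_
    rw [Finset.mul_sum]
    refine Finset.sum_congr rfl fun j _ => ?_
    ring


end AuxEqualityCase

open Finset Module Matrix in
/-- If a nonzero symmetric trace-free bilinear form `E` (components in an
orthonormal basis of an `n`-dimensional inner product space, `n ≥ 3`, so `g = δ`) with
`R > 0` attains equality in the conformally flat curvature quadratic-form estimate
`-Rm_{ikjl}E_{ij}E_{kl} + Ric_{jk}E_{ij}E_{ik} = (1/(n-1))|E|²(R - √(n(n-1))|E|)`,
then `E` has an eigenvalue of multiplicity `n-1` and another of multiplicity `1`. -/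
theorem equality_case_eigenvalue_structure (n : ℕ) (hn : 3 ≤ n) (R : ℝ) (hR : 0 < R)
    (E : Matrix (Fin n) (Fin n) ℝ) (hsymm : E.IsSymm) (htr : ∑ i, E i i = 0) (hne : E ≠ 0)
    (g : Fin n → Fin n → ℝ) (hg : ∀ i j, g i j = if i = j then 1 else 0)
    (Rm : Fin n → Fin n → Fin n → Fin n → ℝ)
    (hRm : ∀ i k j l, Rm i k j l =
        (1 / ((n : ℝ) - 2)) *
          (E i j * g k l - E i l * g j k + E k l * g i j - E j k * g i l) +
        (R / ((n : ℝ) * ((n : ℝ) - 1))) * (g i j * g k l - g i l * g j k))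
    (Ric : Fin n → Fin n → ℝ)
    (hRic : ∀ j k, Ric j k = E j k + (R / (n : ℝ)) * g j k)
    (heq : -(∑ i, ∑ k, ∑ j, ∑ l, Rm i k j l * E i j * E k l) +
          (∑ i, ∑ j, ∑ k, Ric j k * E i j * E i k) =
        (1 / ((n : ℝ) - 1)) * (∑ i, ∑ j, (E i j) ^ 2) *
          (R - Real.sqrt ((n : ℝ) * ((n : ℝ) - 1)) *
            Real.sqrt (∑ i, ∑ j, (E i j) ^ 2))) :
    ∃ μ ν : ℝ, μ ≠ ν ∧
      Module.finrank ℝ (Module.End.eigenspace (Matrix.toLin' E) μ) = n - 1 ∧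
      Module.finrank ℝ (Module.End.eigenspace (Matrix.toLin' E) ν) = 1 := by
  classical
  have hE : E.IsHermitian := by
    rwa [Matrix.IsHermitian, Matrix.conjTranspose_eq_transpose_of_trivial]
  have hsym : ∀ i j, E i j = E j i := fun i j => Matrix.IsSymm.apply hsymm j i
  obtain ⟨hl1, hl2, hl3⟩ := eig_traces E hE
  have hS2 : ∑ i, ∑ j, E i j * E j i = ∑ i, ∑ j, (E i j)^2 := by
    refine Finset.sum_congr rfl fun i _ => Finset.sum_congr rfl fun j _ => ?_
    rw [← hsym i j, sq]
  have hSpos : 0 < ∑ i, ∑ j, (E i j)^2 := by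
    have hex : ∃ i j, E i j ≠ 0 := by
      by_contra h
      push_neg at h
      exact hne (by ext i j; exact h i j)
    obtain ⟨i0, j0, h0⟩ := hex
    have h1 : (E i0 j0)^2 ≤ ∑ j, (E i0 j)^2 :=
      Finset.single_le_sum (f := fun j => (E i0 j)^2) (fun j _ => sq_nonneg _)
        (Finset.mem_univ j0)
    have h2 : ∑ j, (E i0 j)^2 ≤ ∑ i, ∑ j, (E i j)^2 :=
      Finset.single_le_sum (f := fun i => ∑ j, (E i j)^2)
        (fun i _ => Finset.sum_nonneg fun j _ => sq_nonneg _) (Finset.mem_univ i0)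
    have h0' : 0 < (E i0 j0)^2 := by positivity
    linarith
  have hT := quad_sum n R E hsymm htr g hg Rm hRm
  have hRicS := ric_sum n R E hsymm g hg Ric hRic
  rw [hT, hRicS] at heq
  have hn3 : (3:ℝ) ≤ (n:ℝ) := by exact_mod_cast hn
  have hD : 0 < (n:ℝ)*((n:ℝ)-1) := by nlinarith
  have hmul : Real.sqrt ((n:ℝ)*((n:ℝ)-1)) * Real.sqrt ((n:ℝ)*((n:ℝ)-1))
      = (n:ℝ)*((n:ℝ)-1) := Real.mul_self_sqrt hD.le
  have hsq0 : Real.sqrt ((n:ℝ)*((n:ℝ)-1)) ≠ 0 := ne_of_gt (Real.sqrt_pos.mpr hD)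
  have h3 : (∑ i, (hE.eigenvalues i)^3)
      = -(((n:ℝ)-2)/Real.sqrt ((n:ℝ)*((n:ℝ)-1))) *
        ((∑ i, (hE.eigenvalues i)^2) * Real.sqrt (∑ i, (hE.eigenvalues i)^2)) := by
    rw [hl3, hl2, hS2]
    have hn2 : ((n:ℝ)-2) ≠ 0 := by linarith
    have hn1 : ((n:ℝ)-1) ≠ 0 := by linarith
    have hn0 : (n:ℝ) ≠ 0 := by linarith
    generalize hd : Real.sqrt ((n:ℝ)*((n:ℝ)-1)) = d at hmul hsq0 heq ⊢
    generalize hs : Real.sqrt (∑ i, ∑ j, (E i j)^2) = s at heq ⊢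
    generalize hT3 : (∑ i, ∑ j, ∑ k, E i j * E j k * E k i) = T at heq ⊢
    generalize hSs : (∑ i, ∑ j, (E i j)^2) = Q at heq ⊢
    field_simp at heq
    have key : ((n:ℝ)^3*((n:ℝ)-1)^2) * (T*d + ((n:ℝ)-2)*(Q*s)) = 0 := by
      linear_combination (n:ℝ)*((n:ℝ)-1)*d*heq - ((n:ℝ)*((n:ℝ)-1)*(n:ℝ)*((n:ℝ)-2)*(Q*s))*hmul
    have hnz : ((n:ℝ)^3*((n:ℝ)-1)^2) ≠ 0 :=
      mul_ne_zero (pow_ne_zero _ hn0) (pow_ne_zero _ hn1)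
    have h0 : T*d + ((n:ℝ)-2)*(Q*s) = 0 := by
      rcases mul_eq_zero.mp key with h | h
      · exact absurd h hnz
      · exact h
    field_simp
    linarith
  have htr' : ∑ i, hE.eigenvalues i = 0 := by rw [hl1]; exact htr
  have hSpos' : 0 < ∑ i, (hE.eigenvalues i)^2 := by rw [hl2, hS2]; exact hSpos
  obtain ⟨μ, ν, hμν, hA, hB⟩ := eig_char n hn hE.eigenvalues htr' hSpos' h3
  obtain ⟨hfr1, hfr2⟩ := eigensp_exact n E hE μ ν hμν hA hB hn
  exact ⟨μ, ν, hμν, hfr1, hfr2⟩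
end
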